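/- Let Z and X be finite-dimensional real normed vector spaces, K ⊆ Z a convex cone, m* ∈ Z*, and L ∈ B(Z,X) such that L(K) = X. Let H be a set of piecewise continuous K-valued trajectories z : [t0,t1] → K on compact intervals such that for every z0 ∈ K with L(z0) = 0 and every compact interval [t0,t1], the constant trajectory z(t) ≡ z0 belongs to H, and suppose each z ∈ H is assigned a nonempty set H_z of L-antiderivatives of z. Then the following are equivalent: (i) there exists p* ∈ X* such that p*(L(z)) − m*(z) ≤ 0 for all z ∈ K; (ii) there exists a continuous V : X → ℝ with V(0) = 0 such that V(x(t0)) + ∫_{t0}^{t1} m*(z(t)) dt ≥ V(x(t1)) for every z ∈ H on [t0,t1] and every x ∈ H_z. -/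

import Mathlib

open Filter Set

/-- A function `f : ℝ → E` is piecewise continuous on `[a, b]` if it is continuous
there except possibly at finitely many points, at each of which it possesses
one-sided limits. -/
def PiecewiseContinuousOn {E : Type*} [NormedAddCommGroup E]
    (f : ℝ → E) (a b : ℝ) : Prop :=
  ∃ S : Finset ℝ, ContinuousOn f (Set.Icc a b \ S) ∧
    ∀ t ∈ S, (∃ l, Tendsto f (nhdsWithin t (Set.Iio t)) (nhds l)) ∧
      (∃ l, Tendsto f (nhdsWithin t (Set.Ioi t)) (nhds l))

/-- A piecewise continuous function is interval integrable. -/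
lemma PiecewiseContinuousOn.intervalIntegrable {E : Type*} [NormedAddCommGroup E]
    {f : ℝ → E} {a b : ℝ} (hab : a ≤ b) (h : PiecewiseContinuousOn f a b) :
    IntervalIntegrable f MeasureTheory.volume a b := by
  obtain ⟨S, hc, hlim⟩ := h
  -- local boundedness near each point of `Icc a b`
  have key : ∀ t : ℝ, ∃ C : ℝ, t ∈ Set.Icc a b →
      ∀ᶠ s in nhds t, s ∈ Set.Icc a b \ ↑S → ‖f s‖ ≤ C := by
    intro t
    by_cases htS : t ∈ S
    · obtain ⟨⟨l1, hl1⟩, ⟨l2, hl2⟩⟩ := hlim t htS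
      refine ⟨max ‖l1‖ ‖l2‖ + 1, fun _ => ?_⟩
      have h1 : ∀ᶠ s in nhdsWithin t (Set.Iio t), ‖f s‖ ≤ max ‖l1‖ ‖l2‖ + 1 := by
        filter_upwards [hl1.norm.eventually_lt_const
          (lt_of_le_of_lt (le_max_left ‖l1‖ ‖l2‖) (lt_add_one _))] with s hs using hs.le
      have h2 : ∀ᶠ s in nhdsWithin t (Set.Ioi t), ‖f s‖ ≤ max ‖l1‖ ‖l2‖ + 1 := by
        filter_upwards [hl2.norm.eventually_lt_const
          (lt_of_le_of_lt (le_max_right ‖l1‖ ‖l2‖) (lt_add_one _))] with s hs using hs.le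
      have h12 : ∀ᶠ s in nhdsWithin t {t}ᶜ, ‖f s‖ ≤ max ‖l1‖ ‖l2‖ + 1 := by
        rw [← nhdsLT_sup_nhdsGT]
        exact eventually_sup.2 ⟨h1, h2⟩
      rw [eventually_nhdsWithin_iff] at h12
      filter_upwards [h12] with s hs hsIcc
      exact hs (fun hst => hsIcc.2 (by rw [hst]; exact htS))
    · refine ⟨‖f t‖ + 1, fun ht => ?_⟩
      have hcw := hc t ⟨ht, htS⟩
      have : ∀ᶠ s in nhdsWithin t (Set.Icc a b \ ↑S), ‖f s‖ ≤ ‖f t‖ + 1 := by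
        filter_upwards [hcw.norm.eventually_lt_const (lt_add_one ‖f t‖)] with s hs using hs.le
      rw [eventually_nhdsWithin_iff] at this
      exact this
  choose C hC using key
  -- global bound by compactness
  have hbdd : ∃ M : ℝ, ∀ s ∈ Set.Icc a b \ ↑S, ‖f s‖ ≤ M := by
    set U : ℝ → Set ℝ := fun t => {s | s ∈ Set.Icc a b \ ↑S → ‖f s‖ ≤ C t} with hU
    obtain ⟨T, hTmem, hTcov⟩ := isCompact_Icc.elim_nhds_subcover U
      (fun t ht => (hC t ht : _))
    have hTne : T.Nonempty := by
      rcases Finset.eq_empty_or_nonempty T with rfl | h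
      · exfalso
        have := hTcov (Set.left_mem_Icc.2 hab)
        simpa using this
      · exact h
    refine ⟨T.sup' hTne C, fun s hs => ?_⟩
    have := hTcov hs.1
    simp only [Set.mem_iUnion] at this
    obtain ⟨x, hxT, hxU⟩ := this
    exact le_trans (hxU hs) (Finset.le_sup' C hxT)
  obtain ⟨M, hM⟩ := hbdd
  have hSnull : MeasureTheory.volume (↑S : Set ℝ) = 0 := (S.finite_toSet).measure_zero _
  have hmeas : MeasurableSet (Set.Icc a b \ ↑S) :=
    measurableSet_Icc.diff (S.finite_toSet).measurableSet
  have haem : MeasureTheory.AEStronglyMeasurable f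
      (MeasureTheory.volume.restrict (Set.Icc a b \ ↑S)) :=
    hc.aestronglyMeasurable hmeas
  have hint : MeasureTheory.IntegrableOn f (Set.Icc a b \ ↑S) := by
    refine ⟨haem, MeasureTheory.HasFiniteIntegral.restrict_of_bounded (C := M) ?_ ?_⟩
    · exact lt_of_le_of_lt (MeasureTheory.measure_mono Set.diff_subset) measure_Icc_lt_top
    · exact (MeasureTheory.ae_restrict_iff' hmeas).2 (MeasureTheory.ae_of_all _ hM)
  have hcongr : (Set.Icc a b : Set ℝ) =ᵐ[MeasureTheory.volume]
      (Set.Icc a b \ (↑S : Set ℝ)) := by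
    exact (MeasureTheory.diff_ae_eq_self.2 (by
      exact MeasureTheory.measure_mono_null Set.inter_subset_right hSnull)).symm
  have : MeasureTheory.IntegrableOn f (Set.Icc a b) := hint.congr_set_ae hcongr
  exact (intervalIntegrable_iff_integrableOn_Icc_of_le hab).2 this

/-- Corollary, conditions (i) ⇔ (ii). Here a trajectory is encoded as a
triple `p = (t0, t1, z)` with `z : ℝ → Z` considered on the compact interval
`[t0, t1]`; `H` is a set of such triples, all piecewise continuous and `K`-valued,
containing all constant trajectories at kernel points of `L`, and `Hx p` is a
nonempty set of `L`-antiderivatives of `p`. -/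
theorem exists_functional_conic_ineq_iff_storage
    {Z X : Type*} [NormedAddCommGroup Z] [NormedSpace ℝ Z] [FiniteDimensional ℝ Z]
    [NormedAddCommGroup X] [NormedSpace ℝ X] [FiniteDimensional ℝ X]
    (K : Set Z) (hKcone : ∀ z ∈ K, ∀ α : ℝ, 0 ≤ α → α • z ∈ K) (hKconv : Convex ℝ K)
    (mstar : Z →L[ℝ] ℝ) (L : Z →L[ℝ] X) (hLK : L '' K = Set.univ)
    (H : Set (ℝ × ℝ × (ℝ → Z)))
    (Hx : ℝ × ℝ × (ℝ → Z) → Set (ℝ → X))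
    (hH : ∀ p ∈ H, p.1 ≤ p.2.1 ∧ (∀ t ∈ Set.Icc p.1 p.2.1, p.2.2 t ∈ K) ∧
      PiecewiseContinuousOn p.2.2 p.1 p.2.1)
    (hHconst : ∀ z0 ∈ K, L z0 = 0 → ∀ t0 t1 : ℝ, t0 ≤ t1 →
      (t0, t1, fun _ : ℝ => z0) ∈ H)
    (hHx : ∀ p ∈ H, (Hx p).Nonempty ∧ ∀ x ∈ Hx p,
      ∀ s ∈ Set.Icc p.1 p.2.1, ∀ t ∈ Set.Icc p.1 p.2.1,
        x t - x s = ∫ τ in s..t, L (p.2.2 τ)) :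
    (∃ pstar : X →L[ℝ] ℝ, ∀ z ∈ K, pstar (L z) - mstar z ≤ 0) ↔
      (∃ V : X → ℝ, Continuous V ∧ V 0 = 0 ∧ ∀ p ∈ H, ∀ x ∈ Hx p,
        V (x p.2.1) ≤ V (x p.1) + ∫ t in p.1..p.2.1, mstar (p.2.2 t)) := by
  -- K is closed under addition
  have hKadd : ∀ z ∈ K, ∀ w ∈ K, z + w ∈ K := by
    intro z hz w hw
    have h2 := hKconv hz hw (by norm_num : (0:ℝ) ≤ 1/2) (by norm_num : (0:ℝ) ≤ 1/2)
      (by norm_num)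
    have := hKcone _ h2 2 (by norm_num)
    rwa [smul_add, smul_smul, smul_smul, show (2:ℝ) * (1/2) = 1 by norm_num, one_smul,
      one_smul] at this
  have hK0 : (0 : Z) ∈ K := by
    have : (L 0 : X) ∈ L '' K := by rw [hLK]; trivial
    obtain ⟨w, hw, -⟩ := this
    simpa using hKcone w hw 0 le_rfl
  constructor
  · -- (i) → (ii)
    rintro ⟨pstar, hpstar⟩
    refine ⟨fun x => pstar x, pstar.continuous, by simp, ?_⟩
    rintro ⟨t0, t1, z⟩ hp x hx
    obtain ⟨hle, hKval, hpcw⟩ := hH _ hp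
    simp only at hle hKval hpcw ⊢
    have hzint : IntervalIntegrable z MeasureTheory.volume t0 t1 :=
      hpcw.intervalIntegrable hle
    have hLzint : IntervalIntegrable (fun t => L (z t)) MeasureTheory.volume t0 t1 := by
      rw [intervalIntegrable_iff] at hzint ⊢
      exact L.integrable_comp hzint
    have hmzint : IntervalIntegrable (fun t => mstar (z t)) MeasureTheory.volume t0 t1 := by
      rw [intervalIntegrable_iff] at hzint ⊢
      exact mstar.integrable_comp hzint
    have hpLzint : IntervalIntegrable (fun t => pstar (L (z t)))
        MeasureTheory.volume t0 t1 := by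
      rw [intervalIntegrable_iff] at hLzint ⊢
      exact pstar.integrable_comp hLzint
    have hdiff := (hHx _ hp).2 x hx t0 (Set.left_mem_Icc.2 hle) t1 (Set.right_mem_Icc.2 hle)
    have hcomm : ∫ t in t0..t1, pstar (L (z t)) = pstar (∫ t in t0..t1, L (z t)) :=
      pstar.intervalIntegral_comp_comm hLzint
    have hmono : ∫ t in t0..t1, pstar (L (z t)) ≤ ∫ t in t0..t1, mstar (z t) :=
      intervalIntegral.integral_mono_on hle hpLzint hmzint
        (fun t ht => sub_nonpos.1 (hpstar _ (hKval t ht)))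
    have : pstar (x t1) - pstar (x t0) = ∫ t in t0..t1, pstar (L (z t)) := by
      rw [hcomm, ← hdiff, map_sub]
    linarith
  · -- (ii) → (i)
    rintro ⟨V, -, -, hV⟩
    -- m* is nonnegative on K ∩ ker L
    have hker : ∀ z0 ∈ K, L z0 = 0 → 0 ≤ mstar z0 := by
      intro z0 hz0 hLz0
      have hp := hHconst z0 hz0 hLz0 0 1 zero_le_one
      obtain ⟨⟨x, hx⟩, hanti⟩ := hHx _ hp
      have hVx := hV _ hp x hx
      have hd := hanti x hx 0 (by simp) 1 (by simp)
      simp only [hLz0, intervalIntegral.integral_const, smul_zero] at hd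
      have hx01 : x 1 = x 0 := by
        have := sub_eq_zero.1 hd; exact this
      simp only [hx01, intervalIntegral.integral_const, smul_eq_mul] at hVx
      linarith
    -- the sublinear function N
    set N : X → ℝ := fun x => sInf ((fun z => mstar z) '' {z ∈ K | L z = x}) with hN
    have hne : ∀ x : X, ((fun z => mstar z) '' {z ∈ K | L z = x}).Nonempty := by
      intro x
      have : x ∈ L '' K := by rw [hLK]; trivial
      obtain ⟨z, hz, hLz⟩ := this
      exact ⟨mstar z, z, ⟨hz, hLz⟩, rfl⟩
    have hbdd : ∀ x : X, BddBelow ((fun z => mstar z) '' {z ∈ K | L z = x}) := by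
      intro x
      have : -x ∈ L '' K := by rw [hLK]; trivial
      obtain ⟨w, hw, hLw⟩ := this
      refine ⟨-mstar w, ?_⟩
      rintro y ⟨z, ⟨hz, hLz⟩, rfl⟩
      have hsum : 0 ≤ mstar (z + w) :=
        hker _ (hKadd z hz w hw) (by rw [map_add, hLz, hLw, add_neg_cancel])
      rw [map_add] at hsum
      linarith
    have hNle : ∀ x : X, ∀ z ∈ K, L z = x → N x ≤ mstar z := by
      intro x z hz hLz
      exact csInf_le (hbdd x) ⟨z, ⟨hz, hLz⟩, rfl⟩
    have hleN : ∀ x : X, ∀ c : ℝ, (∀ z ∈ K, L z = x → c ≤ mstar z) → c ≤ N x := by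
      intro x c hc
      exact le_csInf (hne x) (by rintro y ⟨z, ⟨hz, hLz⟩, rfl⟩; exact hc z hz hLz)
    -- N is positively homogeneous
    have hhom_le : ∀ c : ℝ, 0 < c → ∀ x : X, N (c • x) ≤ c * N x := by
      intro c hc x
      rw [show c * N x = c * N x from rfl]
      have : N (c • x) / c ≤ N x := by
        refine hleN x _ (fun z hz hLz => ?_)
        have hcz : c • z ∈ K := hKcone z hz c hc.le
        have := hNle (c • x) (c • z) hcz (by rw [map_smul, hLz])
        rw [map_smul, smul_eq_mul] at this
        rw [div_le_iff₀' hc]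
        exact this
      calc N (c • x) = c * (N (c • x) / c) := by field_simp
        _ ≤ c * N x := by nlinarith [this]
    have hhom : ∀ c : ℝ, 0 < c → ∀ x : X, N (c • x) = c * N x := by
      intro c hc x
      refine le_antisymm (hhom_le c hc x) ?_
      have := hhom_le c⁻¹ (inv_pos.2 hc) (c • x)
      rw [smul_smul, inv_mul_cancel₀ hc.ne', one_smul] at this
      have h2 := mul_le_mul_of_nonneg_left this hc.le
      rw [← mul_assoc, mul_inv_cancel₀ hc.ne', one_mul] at h2
      exact h2
    -- N is subadditive
    have hadd : ∀ x y : X, N (x + y) ≤ N x + N y := by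
      intro x y
      have h1 : N (x + y) - N y ≤ N x := by
        refine hleN x _ (fun z1 hz1 hLz1 => ?_)
        have h2 : N (x + y) - mstar z1 ≤ N y := by
          refine hleN y _ (fun z2 hz2 hLz2 => ?_)
          have := hNle (x + y) (z1 + z2) (hKadd _ hz1 _ hz2)
            (by rw [map_add, hLz1, hLz2])
          rw [map_add] at this
          linarith
        linarith
      linarith
    -- Hahn–Banach extension from the trivial subspace
    have hN0 : 0 ≤ N 0 := hleN 0 0 (fun z hz hLz => hker z hz hLz)
    obtain ⟨g, -, hg⟩ := exists_extension_of_le_sublinear ⟨⊥, 0⟩ N hhom hadd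
      (by
        rintro ⟨x, hx⟩
        have hx0 : x = 0 := by simpa using hx
        subst hx0
        simpa using hN0)
    refine ⟨LinearMap.toContinuousLinearMap g, fun z hz => ?_⟩
    have := le_trans (hg (L z)) (hNle (L z) z hz rfl)
    simpa [sub_nonpos] using this
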